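/- Termination criterion certifies ε-accuracy: let φ : [a, b] → ℝ be Lipschitz with partition points a₀ < ⋯ < a_{n+1}, valid local Lipschitz constants lᵢ, characteristic values Rᵢ as above, R_min = minᵢ Rᵢ and φ̂_min = minᵢ φ(aᵢ). If φ̂_min − R_min ≤ ε, then R_min ≤ min_{x∈[a,b]} φ(x) ≤ R_min + ε. -/

import Mathlib

/-- Termination criterion certifies ε-accuracy: if `φ̂_min − R_min ≤ ε` then
`R_min ≤ min_{x∈[a,b]} φ(x) ≤ R_min + ε`. -/
theorem termination_eps_accuracy (φ : ℝ → ℝ) (n : ℕ) (a : Fin (n + 2) → ℝ)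
    (hmono : StrictMono a)
    (l : Fin (n + 1) → ℝ) (hl : ∀ i, 0 ≤ l i)
    (hlip : ∀ i : Fin (n + 1), ∀ x ∈ Set.Icc (a i.castSucc) (a i.succ),
      ∀ y ∈ Set.Icc (a i.castSucc) (a i.succ), |φ x - φ y| ≤ l i * |x - y|)
    (ε : ℝ)
    (hterm :
      Finset.univ.inf' Finset.univ_nonempty (fun i : Fin (n + 2) => φ (a i)) -
        Finset.univ.inf' Finset.univ_nonempty
          (fun i : Fin (n + 1) =>
            (φ (a i.castSucc) + φ (a i.succ)) / 2 +
              l i * (a i.castSucc - a i.succ) / 2) ≤ ε) :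
    (∀ x ∈ Set.Icc (a 0) (a (Fin.last (n + 1))),
      Finset.univ.inf' Finset.univ_nonempty
        (fun i : Fin (n + 1) =>
          (φ (a i.castSucc) + φ (a i.succ)) / 2 +
            l i * (a i.castSucc - a i.succ) / 2) ≤ φ x) ∧
    (∃ x ∈ Set.Icc (a 0) (a (Fin.last (n + 1))),
      φ x ≤ Finset.univ.inf' Finset.univ_nonempty
        (fun i : Fin (n + 1) =>
          (φ (a i.castSucc) + φ (a i.succ)) / 2 +
            l i * (a i.castSucc - a i.succ) / 2) + ε) := by
  constructor
  · -- lower bound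
    rintro x ⟨hx0, hxl⟩
    -- find the subinterval containing x
    have hcover : ∃ i : Fin (n + 1), a i.castSucc ≤ x ∧ x ≤ a i.succ := by
      set S : Finset (Fin (n + 1)) :=
        Finset.univ.filter (fun i => a i.castSucc ≤ x) with hS
      have h0 : (0 : Fin (n + 1)) ∈ S := by
        simp only [hS, Finset.mem_filter, Finset.mem_univ, true_and]
        simpa using hx0
      have hne : S.Nonempty := ⟨0, h0⟩
      refine ⟨S.max' hne, ?_, ?_⟩
      · have := S.max'_mem hne
        simpa [hS] using this
      · by_contra h
        push_neg at h
        set j := S.max' hne with hj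
        rcases lt_or_eq_of_le (Nat.lt_succ_iff.mp j.isLt) with hjn | hjn
        · -- j < n, so j+1 is in S, contradicting maximality
          have hmem : (⟨(j : ℕ) + 1, by omega⟩ : Fin (n + 1)) ∈ S := by
            simp only [hS, Finset.mem_filter, Finset.mem_univ, true_and]
            have : (⟨(j : ℕ) + 1, by omega⟩ : Fin (n + 1)).castSucc = j.succ := by
              ext; simp
            rw [this]
            exact h.le
          have hle' : (⟨(j : ℕ) + 1, by omega⟩ : Fin (n + 1)) ≤ j :=
            S.le_max' _ hmem
          simp [Fin.le_def] at hle'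
        · -- j = n, so j.succ = last
          have : j.succ = Fin.last (n + 1) := by
            ext; simp [hjn]
          rw [this] at h
          exact absurd hxl (not_le.mpr h)
    obtain ⟨i, hix, hxi⟩ := hcover
    have hxmem : x ∈ Set.Icc (a i.castSucc) (a i.succ) := ⟨hix, hxi⟩
    have hle : a i.castSucc ≤ a i.succ := (hmono (Fin.castSucc_lt_succ : i.castSucc < i.succ)).le
    have h1 := hlip i x hxmem (a i.castSucc) ⟨le_refl _, hle⟩
    have h2 := hlip i x hxmem (a i.succ) ⟨hle, le_refl _⟩
    rw [abs_of_nonneg (by linarith : (0:ℝ) ≤ x - a i.castSucc)] at h1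
    rw [abs_of_nonpos (by linarith : x - a i.succ ≤ 0)] at h2
    have h1' := (abs_le.mp h1).1
    have h2' := (abs_le.mp h2).1
    have hRi : (φ (a i.castSucc) + φ (a i.succ)) / 2 +
        l i * (a i.castSucc - a i.succ) / 2 ≤ φ x := by linarith
    exact le_trans (Finset.inf'_le _ (Finset.mem_univ i)) hRi
  · -- upper bound: the best sampled point works
    obtain ⟨i₀, -, hi₀⟩ := Finset.exists_mem_eq_inf' (Finset.univ_nonempty)
      (fun i : Fin (n + 2) => φ (a i))
    refine ⟨a i₀, ⟨hmono.monotone (Fin.zero_le _), hmono.monotone (Fin.le_last _)⟩, ?_⟩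
    rw [hi₀] at hterm
    linarith
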